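/- Let k ≥ 2 and let g(x) = ∫₀^∞ (k/t^k)(t−x)₊^{k−1} dF(t) for a probability distribution F on (0,∞). Then for each j = 1, …, k, t^j g^{(j−1)}(t) → 0 as t → ∞. -/

import Mathlib

open MeasureTheory Filter Set Metric Topology

namespace KMonDecayAux

noncomputable def H (F : Measure ℝ) (k m : ℕ) (x : ℝ) : ℝ :=
  ∫ t in Set.Ioi (0:ℝ), ((k:ℝ) / t ^ k) * max (t - x) 0 ^ m ∂F

lemma meas (k m : ℕ) (x : ℝ) :
    Measurable fun t : ℝ => ((k:ℝ) / t ^ k) * max (t - x) 0 ^ m := by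
  fun_prop

lemma point_bound {k m : ℕ} (hmk : m ≤ k) {x s : ℝ} (hx : 0 < x) (hxs : x < s) :
    ((k:ℝ) / s ^ k) * max (s - x) 0 ^ m ≤ (k:ℝ) / x ^ (k - m) := by
  have hs : (0:ℝ) < s := hx.trans hxs
  rw [max_eq_left (by linarith)]
  have h2 : (s - x) ^ m ≤ s ^ m := pow_le_pow_left₀ (by linarith) (by linarith) m
  have hsk : (0:ℝ) < s ^ k := pow_pos hs k
  have hxp : (0:ℝ) < x ^ (k - m) := pow_pos hx _
  have hsp : (0:ℝ) < s ^ (k - m) := pow_pos hs _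
  calc ((k:ℝ)/s^k) * (s-x)^m ≤ ((k:ℝ)/s^k) * s^m := by
        have h0 : (0:ℝ) ≤ (k:ℝ)/s^k := div_nonneg (Nat.cast_nonneg k) hsk.le
        gcongr
    _ = (k:ℝ) / s^(k-m) := by
        rw [div_mul_eq_mul_div, eq_div_iff hsp.ne', div_mul_eq_mul_div,
          eq_comm, eq_div_iff hsk.ne', mul_assoc, pow_mul_pow_sub s hmk]
    _ ≤ (k:ℝ) / x^(k-m) := by
        have h0 : x ^ (k-m) ≤ s ^ (k-m) := pow_le_pow_left₀ hx.le hxs.le _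
        gcongr

lemma vanish (k : ℕ) {m : ℕ} (hm : 1 ≤ m) {x s : ℝ} (hsx : s ≤ x) :
    ((k:ℝ) / s ^ k) * max (s - x) 0 ^ m = 0 := by
  rw [max_eq_right (by linarith), zero_pow (by omega), mul_zero]

lemma integral_bound (F : Measure ℝ) [IsFiniteMeasure F] (f : ℝ → ℝ) {C a : ℝ} (ha : 0 < a)
    (hmf : Measurable f)
    (h0 : ∀ s ∈ Ioc (0:ℝ) a, f s = 0) (hC : ∀ s ∈ Ioi a, |f s| ≤ C) :
    |∫ s in Ioi (0:ℝ), f s ∂F| ≤ C * (F (Ioi a)).toReal := by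
  have hCnn : 0 ≤ C := le_trans (abs_nonneg _) (hC (a+1) (by simp only [Set.mem_Ioi]; linarith))
  have h1 : IntegrableOn f (Ioc 0 a) F :=
    (integrableOn_zero).congr_fun (fun s hs => (h0 s hs).symm) measurableSet_Ioc
  have h2 : IntegrableOn f (Ioi a) F := by
    refine Integrable.mono' (integrable_const C) hmf.aestronglyMeasurable ?_
    rw [ae_restrict_iff' measurableSet_Ioi]
    exact Eventually.of_forall fun s hs => by simpa [Real.norm_eq_abs] using hC s hs
  rw [← Ioc_union_Ioi_eq_Ioi ha.le,
    setIntegral_union (Ioc_disjoint_Ioi le_rfl) measurableSet_Ioi h1 h2,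
    setIntegral_eq_zero_of_forall_eq_zero h0, zero_add]
  have hb := norm_setIntegral_le_of_norm_le_const (μ := F) (s := Ioi a) (f := f) (C := C)
    (measure_lt_top F _)
    (fun s hs => by rw [Real.norm_eq_abs]; exact hC s hs)
  simpa [Real.norm_eq_abs, Measure.real] using hb

lemma H_integrable (F : Measure ℝ) [IsFiniteMeasure F] {k m : ℕ} (hm1 : 1 ≤ m) (hmk : m ≤ k)
    {x : ℝ} (hx : 0 < x) :
    Integrable (fun t : ℝ => ((k:ℝ) / t ^ k) * max (t - x) 0 ^ m) (F.restrict (Ioi 0)) := by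
  refine Integrable.mono' (integrable_const ((k:ℝ)/x^(k-m)))
    ((meas k m x).aestronglyMeasurable) ?_
  rw [ae_restrict_iff' measurableSet_Ioi]
  refine Eventually.of_forall fun s hs => ?_
  have hs0 : (0:ℝ) < s := hs
  rcases le_or_gt s x with h | h
  · rw [Real.norm_eq_abs, vanish k hm1 h, abs_zero]
    positivity
  · rw [Real.norm_eq_abs, abs_of_nonneg (by positivity)]
    exact point_bound hmk hx h

lemma H_le (F : Measure ℝ) [IsFiniteMeasure F] {k m : ℕ} (hm1 : 1 ≤ m) (hmk : m ≤ k)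
    {x : ℝ} (hx : 0 < x) :
    |H F k m x| ≤ ((k:ℝ)/x^(k-m)) * (F (Ioi x)).toReal := by
  refine integral_bound F _ hx (meas k m x) (fun s hs => vanish k hm1 hs.2) (fun s hs => ?_)
  have h0 : (0:ℝ) < s := hx.trans hs
  rw [abs_of_nonneg (by positivity)]
  exact point_bound hmk hx hs

lemma hasDerivAt_max_pow {m : ℕ} (hm : 2 ≤ m) (z : ℝ) :
    HasDerivAt (fun y : ℝ => max y 0 ^ m) ((m:ℝ) * max z 0 ^ (m-1)) z := by
  rcases lt_trichotomy z 0 with hz | rfl | hz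
  · have h0 : (m:ℝ) * max z 0 ^ (m-1) = 0 := by
      rw [max_eq_right hz.le, zero_pow (by omega), mul_zero]
    rw [h0]
    refine (hasDerivAt_const z 0).congr_of_eventuallyEq ?_
    filter_upwards [Iio_mem_nhds hz] with y hy
    rw [max_eq_right (le_of_lt hy), zero_pow (by omega)]
  · have h0 : (m:ℝ) * max 0 0 ^ (m-1) = 0 := by
      rw [max_self, zero_pow (by omega), mul_zero]
    rw [h0, hasDerivAt_iff_isLittleO]
    have h1 : (fun y : ℝ => max y 0 ^ m) =O[𝓝 0] fun y : ℝ => y ^ m := by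
      refine Asymptotics.IsBigO.of_bound 1 (Eventually.of_forall fun y => ?_)
      rw [one_mul, Real.norm_eq_abs, Real.norm_eq_abs, abs_pow, abs_pow]
      refine pow_le_pow_left₀ (abs_nonneg _) ?_ m
      rcases le_total 0 y with h | h
      · rw [max_eq_left h]
      · rw [max_eq_right h]
        simpa using abs_nonneg y
    have h2 := h1.trans_isLittleO (Asymptotics.isLittleO_pow_id (by omega : 1 < m))
    simpa [zero_pow (show m ≠ 0 by omega)] using h2
  · rw [max_eq_left hz.le]
    refine (hasDerivAt_pow m z).congr_of_eventuallyEq ?_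
    filter_upwards [Ioi_mem_nhds hz] with y hy
    rw [max_eq_left (le_of_lt hy)]

lemma H_hasDeriv (F : Measure ℝ) [IsFiniteMeasure F] {k m : ℕ} (hm : 2 ≤ m) (hmk : m ≤ k)
    {x : ℝ} (hx : 0 < x) :
    HasDerivAt (H F k m) (-(m:ℝ) * H F k (m-1) x) x := by
  have hx2 : (0:ℝ) < x/2 := by linarith
  have inner_deriv : ∀ (y t : ℝ), HasDerivAt (fun y' => ((k:ℝ)/t^k) * max (t - y') 0 ^ m)
      (((k:ℝ)/t^k) * ((m:ℝ) * max (t - y) 0 ^ (m-1) * (-1))) y := by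
    intro y t
    have h1 : HasDerivAt (fun y' : ℝ => t - y') (-1) y := by
      simpa using (hasDerivAt_id y).const_sub t
    have h2 := (hasDerivAt_max_pow hm (t - y)).comp y h1
    exact h2.const_mul ((k:ℝ)/t^k)
  have hmeas : ∀ᶠ y in 𝓝 x, AEStronglyMeasurable
      (fun t : ℝ => ((k:ℝ)/t^k) * max (t - y) 0 ^ m) (F.restrict (Ioi 0)) :=
    Eventually.of_forall fun y => (meas k m y).aestronglyMeasurable
  have hint := H_integrable F (show 1 ≤ m by omega) hmk hx
  have hmeas' : AEStronglyMeasurable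
      (fun t : ℝ => -(m:ℝ) * (((k:ℝ)/t^k) * max (t - x) 0 ^ (m-1))) (F.restrict (Ioi 0)) :=
    ((meas k (m-1) x).const_mul (-(m:ℝ))).aestronglyMeasurable
  have hlip : ∀ᵐ t ∂(F.restrict (Ioi (0:ℝ))), LipschitzOnWith
      (Real.nnabs ((m:ℝ) * (((k:ℝ)/t^k) * max (t - x/2) 0 ^ (m-1))))
      (fun y => ((k:ℝ)/t^k) * max (t - y) 0 ^ m) (ball x (x/2)) := by
    rw [ae_restrict_iff' measurableSet_Ioi]
    refine Eventually.of_forall fun t ht => ?_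
    have ht0 : (0:ℝ) < t := ht
    refine (convex_ball x (x/2)).lipschitzOnWith_of_nnnorm_hasDerivWithin_le
      (f' := fun y => ((k:ℝ)/t^k) * ((m:ℝ) * max (t - y) 0 ^ (m-1) * (-1)))
      (fun y _ => (inner_deriv y t).hasDerivWithinAt) (fun y hy => ?_)
    rw [← NNReal.coe_le_coe, coe_nnnorm, Real.coe_nnabs, Real.norm_eq_abs]
    show |((k:ℝ)/t^k) * ((m:ℝ) * max (t - y) 0 ^ (m-1) * (-1))|
      ≤ |(m:ℝ) * (((k:ℝ)/t^k) * max (t - x/2) 0 ^ (m-1))|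
    have hy2 : x/2 < y := by
      rw [Real.ball_eq_Ioo] at hy
      have := hy.1; linarith
    have hmax : max (t - y) 0 ≤ max (t - x/2) 0 := max_le_max (by linarith) le_rfl
    have e1 : ((k:ℝ)/t^k) * ((m:ℝ) * max (t - y) 0 ^ (m-1) * (-1))
        = -(((k:ℝ)/t^k) * ((m:ℝ) * max (t - y) 0 ^ (m-1))) := by ring
    have hb0 : (0:ℝ) ≤ (m:ℝ) * (((k:ℝ)/t^k) * max (t - x/2) 0 ^ (m-1)) := by positivity
    rw [e1, abs_neg, abs_of_nonneg (by positivity), abs_of_nonneg hb0]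
    have : ((k:ℝ)/t^k) * ((m:ℝ) * max (t - y) 0 ^ (m-1))
        = (m:ℝ) * (((k:ℝ)/t^k) * max (t - y) 0 ^ (m-1)) := by ring
    rw [this]
    gcongr
  have hbint : Integrable
      (fun t : ℝ => (m:ℝ) * (((k:ℝ)/t^k) * max (t - x/2) 0 ^ (m-1))) (F.restrict (Ioi 0)) := by
    refine Integrable.mono' (integrable_const ((m:ℝ) * ((k:ℝ)/(x/2)^(k-(m-1)))))
      ((meas k (m-1) (x/2)).const_mul (m:ℝ)).aestronglyMeasurable ?_
    rw [ae_restrict_iff' measurableSet_Ioi]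
    refine Eventually.of_forall fun t ht => ?_
    have ht0 : (0:ℝ) < t := ht
    rw [Real.norm_eq_abs, abs_of_nonneg (by positivity)]
    rcases le_or_gt t (x/2) with h | h
    · rw [max_eq_right (by linarith), zero_pow (by omega), mul_zero, mul_zero]
      positivity
    · have := point_bound (show m - 1 ≤ k by omega) hx2 h
      gcongr
  have hdiff : ∀ᵐ t ∂(F.restrict (Ioi (0:ℝ))), HasDerivAt
      (fun y => ((k:ℝ)/t^k) * max (t - y) 0 ^ m)
      (-(m:ℝ) * (((k:ℝ)/t^k) * max (t - x) 0 ^ (m-1))) x := by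
    refine Eventually.of_forall fun t => ?_
    have h := inner_deriv x t
    convert h using 1
    ring
  have key := hasDerivAt_integral_of_dominated_loc_of_lip (ball_mem_nhds x hx2) hmeas hint hmeas' hlip hbint hdiff
  have h2 := key.2
  rw [integral_const_mul] at h2
  exact h2

lemma H1_diff_bound (F : Measure ℝ) [IsFiniteMeasure F] {k : ℕ} (hk : 1 ≤ k) {a x y : ℝ}
    (ha : 0 < a) (hx : a < x) (hy : a < y) :
    |H F k 1 x - H F k 1 y| ≤ ((k:ℝ)/a^k * (F (Ioi a)).toReal) * |x - y| := by
  have hx0 : (0:ℝ) < x := ha.trans hx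
  have hy0 : (0:ℝ) < y := ha.trans hy
  have hsub : H F k 1 x - H F k 1 y
      = ∫ t in Ioi (0:ℝ), ((k:ℝ)/t^k) * (max (t - x) 0 ^ 1 - max (t - y) 0 ^ 1) ∂F := by
    rw [H, H, ← integral_sub (H_integrable F le_rfl hk hx0) (H_integrable F le_rfl hk hy0)]
    congr 1
    ext t
    ring
  rw [hsub]
  have := integral_bound F
    (fun t => ((k:ℝ)/t^k) * (max (t - x) 0 ^ 1 - max (t - y) 0 ^ 1))
    (C := ((k:ℝ)/a^k) * |x - y|) ha (by fun_prop) ?_ ?_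
  · calc |∫ t in Ioi (0:ℝ), ((k:ℝ)/t^k) * (max (t - x) 0 ^ 1 - max (t - y) 0 ^ 1) ∂F|
        ≤ ((k:ℝ)/a^k) * |x - y| * (F (Ioi a)).toReal := this
      _ = ((k:ℝ)/a^k * (F (Ioi a)).toReal) * |x - y| := by ring
  · intro s hs
    show ((k:ℝ)/s^k) * (max (s - x) 0 ^ 1 - max (s - y) 0 ^ 1) = 0
    obtain ⟨_, h2⟩ := hs
    rw [max_eq_right (by linarith), max_eq_right (by linarith)]
    ring
  · intro s hs
    show |((k:ℝ)/s^k) * (max (s - x) 0 ^ 1 - max (s - y) 0 ^ 1)| ≤ ((k:ℝ)/a^k) * |x - y|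
    have hsa : a < s := hs
    have hs0 : (0:ℝ) < s := ha.trans hsa
    have h1 : |max (s - x) 0 ^ 1 - max (s - y) 0 ^ 1| ≤ |x - y| := by
      simp only [pow_one]
      have h2 := abs_max_sub_max_le_abs (s - x) (s - y) 0
      have h3 : (s - x) - (s - y) = -(x - y) := by ring
      rw [h3, abs_neg] at h2
      exact h2
    rw [abs_mul]
    have hkk : |(k:ℝ)/s^k| ≤ (k:ℝ)/a^k := by
      rw [abs_of_nonneg (div_nonneg (Nat.cast_nonneg k) (pow_pos hs0 k).le)]
      have h5 : a ^ k ≤ s ^ k := pow_le_pow_left₀ ha.le hsa.le k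
      gcongr
    have h4 : (0:ℝ) ≤ (k:ℝ)/a^k := div_nonneg (Nat.cast_nonneg k) (pow_pos ha k).le
    calc |(k:ℝ)/s^k| * |max (s - x) 0 ^ 1 - max (s - y) 0 ^ 1|
        ≤ ((k:ℝ)/a^k) * |x - y| := mul_le_mul hkk h1 (abs_nonneg _) h4
      _ = ((k:ℝ)/a^k) * |x - y| := rfl

lemma iter (k : ℕ) (hk : 2 ≤ k) (F : Measure ℝ) [IsFiniteMeasure F] (g : ℝ → ℝ)
    (hg : ∀ x : ℝ, 0 < x → g x = H F k (k-1) x) :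
    ∀ i, i ≤ k - 2 → ∃ c : ℝ, ∀ x : ℝ, 0 < x → iteratedDeriv i g x = c * H F k (k-1-i) x := by
  intro i
  induction i with
  | zero =>
    intro _
    exact ⟨1, fun x hx => by rw [iteratedDeriv_zero, one_mul, hg x hx, Nat.sub_zero]⟩
  | succ i ih =>
    intro hi
    obtain ⟨c, hc⟩ := ih (by omega)
    refine ⟨c * -(((k-1-i : ℕ)):ℝ), fun x hx => ?_⟩
    rw [iteratedDeriv_succ]
    have hev : iteratedDeriv i g =ᶠ[𝓝 x] fun y => c * H F k (k-1-i) y :=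
      eventually_of_mem (Ioi_mem_nhds hx) (fun y hy => hc y hy)
    rw [hev.deriv_eq]
    have hm2 : 2 ≤ k - 1 - i := by omega
    have hmk : k - 1 - i ≤ k := by omega
    have hd := (H_hasDeriv F hm2 hmk hx).const_mul c
    rw [hd.deriv]
    have he : k - 1 - i - 1 = k - 1 - (i+1) := by omega
    rw [he]
    ring

end KMonDecayAux

theorem kMonotone_derivative_decay
    (k : ℕ) (hk : 2 ≤ k)
    (F : Measure ℝ) [IsProbabilityMeasure F] (hF0 : F (Set.Iic 0) = 0)
    (g : ℝ → ℝ)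
    (hg : ∀ x : ℝ, 0 < x →
      g x = ∫ t in Set.Ioi (0:ℝ), (k / t ^ k) * (max (t - x) 0) ^ (k - 1) ∂F) :
    ∀ j : ℕ, 1 ≤ j → j ≤ k →
      Tendsto (fun t : ℝ => t ^ j * iteratedDeriv (j - 1) g t) atTop (nhds 0) := by
  classical
  intro j hj1 hjk
  open KMonDecayAux in
  have hg' : ∀ x : ℝ, 0 < x → g x = H F k (k-1) x := fun x hx => hg x hx
  have hT : Tendsto (fun a : ℝ => (F (Set.Ioi a)).toReal) atTop (nhds 0) := by
    have h1 : Tendsto (fun a : ℝ => F (Set.Ioi a)) atTop (nhds (F (⋂ a : ℝ, Set.Ioi a))) :=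
      tendsto_measure_iInter_atTop (fun a => measurableSet_Ioi.nullMeasurableSet)
        (fun a b hab => Set.Ioi_subset_Ioi hab) ⟨0, measure_ne_top F _⟩
    have h2 : (⋂ a : ℝ, Set.Ioi a) = ∅ := by
      ext y
      simp only [Set.mem_iInter, Set.mem_Ioi, Set.mem_empty_iff_false, iff_false, not_forall,
        not_lt]
      exact ⟨y, le_rfl⟩
    rw [h2, measure_empty] at h1
    have h3 := (ENNReal.tendsto_toReal (by simp)).comp h1
    simpa [Function.comp_def] using h3
  rcases hjk.lt_or_eq with hlt | rfl
  · -- case j < k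
    obtain ⟨c, hc⟩ := KMonDecayAux.iter k hk F g hg' (j-1) (by omega)
    refine squeeze_zero_norm' (a := fun t : ℝ => (|c| * k) * (F (Set.Ioi t)).toReal) ?_ ?_
    · filter_upwards [eventually_gt_atTop (0:ℝ)] with t ht
      rw [hc t ht]
      have hm1 : 1 ≤ k - 1 - (j-1) := by omega
      have hmk : k - 1 - (j-1) ≤ k := by omega
      have hb := KMonDecayAux.H_le F hm1 hmk ht
      have hexp : k - (k - 1 - (j - 1)) = j := by omega
      rw [hexp] at hb
      have htj : (0:ℝ) < t ^ j := pow_pos ht j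
      calc ‖t^j * (c * H F k (k-1-(j-1)) t)‖
          = t^j * |c| * |H F k (k-1-(j-1)) t| := by
            rw [Real.norm_eq_abs, abs_mul, abs_mul, abs_of_nonneg htj.le, mul_assoc]
        _ ≤ t^j * |c| * (((k:ℝ)/t^j) * (F (Set.Ioi t)).toReal) := by
            have h0 : (0:ℝ) ≤ t^j * |c| := mul_nonneg htj.le (abs_nonneg c)
            gcongr
        _ = (|c| * k) * (F (Set.Ioi t)).toReal := by
            field_simp
    · simpa using hT.const_mul (|c| * (k:ℝ))
  · -- case j = k
    obtain ⟨c, hc0⟩ := KMonDecayAux.iter j hk F g hg' (j-2) (by omega)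
    have h1 : j - 1 - (j-2) = 1 := by omega
    rw [h1] at hc0
    refine squeeze_zero_norm'
      (a := fun t : ℝ => (|c| * ((j:ℝ) * 2^j)) * (F (Set.Ioi (t/2))).toReal) ?_ ?_
    · filter_upwards [eventually_gt_atTop (0:ℝ)] with t ht
      have hj2 : j - 1 = (j-2) + 1 := by omega
      rw [hj2, iteratedDeriv_succ]
      have hev : iteratedDeriv (j-2) g =ᶠ[nhds t] fun y => c * H F j 1 y :=
        eventually_of_mem (Ioi_mem_nhds ht) (fun y hy => hc0 y hy)
      rw [hev.deriv_eq]
      have ht2 : (0:ℝ) < t/2 := by linarith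
      set C : ℝ := |c| * (((j:ℝ)/(t/2)^j) * (F (Set.Ioi (t/2))).toReal) with hCdef
      have hC0 : (0:ℝ) ≤ C := by positivity
      have hder : |deriv (fun y => c * H F j 1 y) t| ≤ C := by
        by_cases hd : DifferentiableAt ℝ (fun y => c * H F j 1 y) t
        · rw [← Real.norm_eq_abs]
          refine HasDerivAt.le_of_lip' hd.hasDerivAt hC0 ?_
          filter_upwards [Ioi_mem_nhds (show t/2 < t by linarith)] with y hy
          have hyt : t/2 < y := hy
          have hdiff := KMonDecayAux.H1_diff_bound F (show 1 ≤ j by omega) ht2 hyt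
            (show t/2 < t by linarith)
          calc ‖c * H F j 1 y - c * H F j 1 t‖
              = |c| * |H F j 1 y - H F j 1 t| := by
                rw [Real.norm_eq_abs, ← mul_sub, abs_mul]
            _ ≤ |c| * (((j:ℝ)/(t/2)^j * (F (Set.Ioi (t/2))).toReal) * |y - t|) := by
                gcongr
            _ = C * ‖y - t‖ := by rw [Real.norm_eq_abs, hCdef]; ring
        · rw [deriv_zero_of_not_differentiableAt hd, abs_zero]
          exact hC0
      have htj : (0:ℝ) < t ^ j := pow_pos ht j
      rw [Real.norm_eq_abs, abs_mul, abs_of_nonneg htj.le]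
      calc t^j * |deriv (fun y => c * H F j 1 y) t| ≤ t^j * C := by gcongr
        _ = (|c| * ((j:ℝ) * 2^j)) * (F (Set.Ioi (t/2))).toReal := by
            rw [hCdef, div_pow]
            field_simp
    · have hhalf : Tendsto (fun t : ℝ => t/2) atTop atTop :=
        tendsto_id.atTop_div_const (by norm_num)
      have := hT.comp hhalf
      simpa using this.const_mul (|c| * ((j:ℝ) * 2^j))
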